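/- Let X be a finite nonempty set, θ : X → ℝ, and Z = Σ_{x∈X} exp(θ(x)). Let {γ(x)}_{x∈X} be independent real random variables, each distributed according to the zero-mean Gumbel distribution. Then for every x̂ ∈ X, the probability that x̂ is the (almost surely unique) maximizer of x ↦ θ(x) + γ(x) equals its Gibbs probability: P_γ[ θ(x̂) + γ(x̂) > θ(x) + γ(x) for all x ∈ X with x ≠ x̂ ] = exp(θ(x̂)) / Z. -/

import Mathlib

open MeasureTheory Real ProbabilityTheory Set Filter Topology


noncomputable def gPDF (b t : ℝ) : ℝ :=
  exp (-(t + eulerMascheroniConstant)) * exp (-(b * exp (-(t + eulerMascheroniConstant))))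

noncomputable def gCDF (b t : ℝ) : ℝ :=
  exp (-(b * exp (-(t + eulerMascheroniConstant))))

lemma gPDF_nonneg (b t : ℝ) : 0 ≤ gPDF b t := by unfold gPDF; positivity

lemma tendsto_neg_nat : Tendsto (fun n : ℕ => -(n:ℝ)) atTop atBot :=
  tendsto_neg_atTop_atBot.comp tendsto_natCast_atTop_atTop

lemma tendsto_const_sub_nat (a : ℝ) : Tendsto (fun n : ℕ => a - (n:ℝ)) atTop atBot := by
  simpa [sub_eq_add_neg] using tendsto_atBot_add_const_left atTop a tendsto_neg_nat

lemma hasDerivAt_gCDF (b t : ℝ) : HasDerivAt (gCDF b) (b * gPDF b t) t := by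
  have h1 : HasDerivAt (fun t : ℝ => -(t + eulerMascheroniConstant)) (-1) t := by
    exact ((hasDerivAt_id t).add_const eulerMascheroniConstant).neg
  have h2 : HasDerivAt (fun t : ℝ => exp (-(t + eulerMascheroniConstant)))
      (exp (-(t + eulerMascheroniConstant)) * (-1)) t := h1.exp
  have h3 : HasDerivAt (fun t : ℝ => -(b * exp (-(t + eulerMascheroniConstant))))
      (-(b * (exp (-(t + eulerMascheroniConstant)) * (-1)))) t := (h2.const_mul b).neg
  have h4 := h3.exp
  have heq : b * gPDF b t = exp (-(b * exp (-(t + eulerMascheroniConstant)))) *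
      (-(b * (exp (-(t + eulerMascheroniConstant)) * (-1)))) := by
    unfold gPDF; ring
  rw [heq]
  exact h4

lemma hasDerivAt_gCDF_div {b : ℝ} (hb : 0 < b) (t : ℝ) :
    HasDerivAt (fun s => gCDF b s / b) (gPDF b t) t := by
  have := (hasDerivAt_gCDF b t).div_const b
  simpa [mul_div_assoc, mul_div_cancel_left₀ _ hb.ne'] using this

lemma tendsto_gCDF_atBot {b : ℝ} (hb : 0 < b) : Tendsto (gCDF b) atBot (nhds 0) := by
  have h1 : Tendsto (fun t : ℝ => -(t + eulerMascheroniConstant)) atBot atTop := by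
    apply tendsto_neg_atBot_atTop.comp
    exact tendsto_atBot_add_const_right _ _ tendsto_id
  have h2 : Tendsto (fun t : ℝ => -(b * exp (-(t + eulerMascheroniConstant)))) atBot atBot := by
    apply tendsto_neg_atTop_atBot.comp
    exact (tendsto_exp_atTop.comp h1).const_mul_atTop hb
  exact tendsto_exp_atBot.comp h2

lemma tendsto_gCDF_atTop {b : ℝ} (hb : 0 < b) : Tendsto (gCDF b) atTop (𝓝 (1:ℝ)) := by
  have h1 : Tendsto (fun t : ℝ => -(t + eulerMascheroniConstant)) atTop atBot := by
    apply tendsto_neg_atTop_atBot.comp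
    exact tendsto_atTop_add_const_right _ _ tendsto_id
  have h2 : Tendsto (fun t : ℝ => -(b * exp (-(t + eulerMascheroniConstant)))) atTop (nhds 0) := by
    have := ((tendsto_exp_atBot.comp h1).const_mul b).neg
    simpa using this
  have h3 : Tendsto (gCDF b) atTop (𝓝 (exp 0)) := (Real.continuous_exp.tendsto 0).comp h2
  rwa [Real.exp_zero] at h3

lemma continuous_gPDF (b : ℝ) : Continuous (gPDF b) := by
  unfold gPDF; fun_prop

lemma intervalIntegral_gPDF {b : ℝ} (hb : 0 < b) (u v : ℝ) :
    ∫ t in u..v, gPDF b t = gCDF b v / b - gCDF b u / b :=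
  intervalIntegral.integral_eq_sub_of_hasDerivAt (fun t _ => hasDerivAt_gCDF_div hb t)
    ((continuous_gPDF b).intervalIntegrable u v)

lemma integrableOn_gPDF_Iic {b : ℝ} (hb : 0 < b) (a : ℝ) :
    IntegrableOn (gPDF b) (Iic a) := by
  apply integrableOn_Iic_of_intervalIntegral_norm_tendsto (gCDF b a / b) a
    (f := gPDF b) (a := fun n : ℕ => a - n) (l := atTop)
  · intro n
    exact (continuous_gPDF b).integrableOn_Ioc
  · exact tendsto_const_sub_nat a
  · have heq : ∀ n : ℕ, ∫ t in (a - n)..a, ‖gPDF b t‖ = gCDF b a / b - gCDF b (a - n) / b := by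
      intro n
      rw [← intervalIntegral_gPDF hb]
      exact intervalIntegral.integral_congr fun t _ => Real.norm_of_nonneg (gPDF_nonneg b t)
    simp_rw [heq]
    have h1 : Tendsto (fun n : ℕ => gCDF b (a - n)) atTop (nhds 0) :=
      (tendsto_gCDF_atBot hb).comp (tendsto_const_sub_nat a)
    simpa using tendsto_const_nhds.sub (h1.div_const b)

lemma setIntegral_gPDF_Iic {b : ℝ} (hb : 0 < b) (a : ℝ) :
    ∫ t in Iic a, gPDF b t = gCDF b a / b := by
  have h := integral_Iic_of_hasDerivAt_of_tendsto'
    (fun t _ => hasDerivAt_gCDF_div hb t) (integrableOn_gPDF_Iic hb a)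
    ((tendsto_gCDF_atBot hb).div_const b)
  simpa using h

lemma integrable_gPDF {b : ℝ} (hb : 0 < b) : Integrable (gPDF b) := by
  apply integrable_of_intervalIntegral_norm_tendsto (1 / b)
    (f := gPDF b) (a := fun n : ℕ => -(n:ℝ)) (b := fun n : ℕ => (n:ℝ)) (l := atTop)
  · intro n; exact (continuous_gPDF b).integrableOn_Ioc
  · exact tendsto_neg_nat
  · exact tendsto_natCast_atTop_atTop
  · have heq : ∀ n : ℕ, ∫ t in (-(n:ℝ))..(n:ℝ), ‖gPDF b t‖
        = gCDF b n / b - gCDF b (-(n:ℝ)) / b := by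
      intro n
      rw [← intervalIntegral_gPDF hb]
      exact intervalIntegral.integral_congr fun t _ => Real.norm_of_nonneg (gPDF_nonneg b t)
    simp_rw [heq]
    have h1 : Tendsto (fun n : ℕ => gCDF b (-(n:ℝ))) atTop (nhds 0) :=
      (tendsto_gCDF_atBot hb).comp tendsto_neg_nat
    have h2 : Tendsto (fun n : ℕ => gCDF b (n:ℝ)) atTop (nhds 1) :=
      (tendsto_gCDF_atTop hb).comp tendsto_natCast_atTop_atTop
    simpa using (h2.div_const b).sub (h1.div_const b)

lemma integral_gPDF {b : ℝ} (hb : 0 < b) : ∫ t, gPDF b t = 1 / b := by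
  have h := intervalIntegral_tendsto_integral (integrable_gPDF hb)
    (a := fun n : ℕ => -(n:ℝ)) (b := fun n : ℕ => (n:ℝ)) (l := atTop)
    tendsto_neg_nat tendsto_natCast_atTop_atTop
  have h2 : Tendsto (fun n : ℕ => ∫ t in (-(n:ℝ))..(n:ℝ), gPDF b t) atTop (nhds (1 / b)) := by
    simp_rw [intervalIntegral_gPDF hb]
    have h1 : Tendsto (fun n : ℕ => gCDF b (-(n:ℝ))) atTop (nhds 0) :=
      (tendsto_gCDF_atBot hb).comp tendsto_neg_nat
    have h3 : Tendsto (fun n : ℕ => gCDF b (n:ℝ)) atTop (nhds 1) :=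
      (tendsto_gCDF_atTop hb).comp tendsto_natCast_atTop_atTop
    simpa using (h3.div_const b).sub (h1.div_const b)
  exact tendsto_nhds_unique h h2


noncomputable def gumbelM : Measure ℝ :=
  MeasureTheory.volume.withDensity (fun t => ENNReal.ofReal (gPDF 1 t))

lemma continuous_gCDF (b : ℝ) : Continuous (gCDF b) := by
  unfold gCDF; fun_prop

lemma gCDF_nonneg (b t : ℝ) : 0 ≤ gCDF b t := (exp_pos _).le

lemma gumbelM_Iic (a : ℝ) : gumbelM (Iic a) = ENNReal.ofReal (gCDF 1 a) := by
  rw [gumbelM, withDensity_apply _ measurableSet_Iic,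
    ← ofReal_integral_eq_lintegral_ofReal (integrableOn_gPDF_Iic one_pos a)
      (ae_of_all _ fun t => gPDF_nonneg 1 t),
    setIntegral_gPDF_Iic one_pos a, div_one]

lemma gumbelM_Iio (a : ℝ) : gumbelM (Iio a) = ENNReal.ofReal (gCDF 1 a) := by
  rw [gumbelM, withDensity_apply _ measurableSet_Iio,
    setLIntegral_congr (Iio_ae_eq_Iic (a := a)), ← withDensity_apply _ measurableSet_Iic,
    ← gumbelM]
  exact gumbelM_Iic a

/-- Let `X` be a finite nonempty set, `θ : X → ℝ`, and
`Z = ∑ x, exp (θ x)`.  If `γ x`, `x : X`, are independent random variables, each with the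
zero-mean Gumbel distribution (cdf `t ↦ exp (-exp (-(t + c)))`, `c` the Euler–Mascheroni
constant), then for every `x₀`, the probability that `x₀` is the strict maximizer of
`x ↦ θ x + γ x` equals its Gibbs probability `exp (θ x₀) / Z`. -/
theorem prob_argmax_eq_gibbs
    {X : Type*} [Fintype X] [Nonempty X] (θ : X → ℝ)
    {Ω : Type*} [MeasurableSpace Ω] (P : Measure Ω) [IsProbabilityMeasure P]
    (γ : X → Ω → ℝ) (hmeas : ∀ x, Measurable (γ x))
    (hindep : iIndepFun γ P)
    (hcdf : ∀ x t, P {ω | γ x ω ≤ t} =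
      ENNReal.ofReal (exp (-exp (-(t + eulerMascheroniConstant)))))
    (x₀ : X) :
    P {ω | ∀ x : X, x ≠ x₀ → θ x + γ x ω < θ x₀ + γ x₀ ω} =
      ENNReal.ofReal (exp (θ x₀) / ∑ x : X, exp (θ x)) := by
  classical
  -- laws
  have hlaw : ∀ x, P.map (γ x) = gumbelM := by
    intro x
    haveI : IsProbabilityMeasure (P.map (γ x)) :=
      Measure.isProbabilityMeasure_map (hmeas x).aemeasurable
    refine Measure.ext_of_Iic _ _ (fun a => ?_)
    rw [Measure.map_apply (hmeas x) measurableSet_Iic, gumbelM_Iic]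
    have h1 : γ x ⁻¹' Iic a = {ω | γ x ω ≤ a} := rfl
    rw [h1, hcdf]
    congr 1
    simp [gCDF]
  have hlio : ∀ x r, P (γ x ⁻¹' Iio r) = ENNReal.ofReal (gCDF 1 r) := by
    intro x r
    rw [← Measure.map_apply (hmeas x) measurableSet_Iio, hlaw x, gumbelM_Iio]
  -- setup
  set T : Finset X := Finset.univ.erase x₀ with hT
  set V : Ω → ({i // i ∈ T} → ℝ) := fun ω i => γ i ω with hV
  have hVmeas : Measurable V := measurable_pi_lambda _ fun i => hmeas i
  have hindepWV : IndepFun (γ x₀) V P := by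
    have h := hindep.indepFun_finset {x₀} T
      (by simp [hT, Finset.disjoint_left]) hmeas
    exact h.comp (measurable_pi_apply (⟨x₀, Finset.mem_singleton_self x₀⟩ :
      {i // i ∈ ({x₀} : Finset X)})) measurable_id
  have hmapprod : P.map (fun ω => (γ x₀ ω, V ω)) = (P.map (γ x₀)).prod (P.map V) :=
    (indepFun_iff_map_prod_eq_prod_map_map (hmeas x₀).aemeasurable hVmeas.aemeasurable).1
      hindepWV
  set B : Set (ℝ × ({i // i ∈ T} → ℝ)) :=
    {p | ∀ i : {i // i ∈ T}, θ i + p.2 i < θ x₀ + p.1} with hBdef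
  have hB : MeasurableSet B := by
    have h1 : B = ⋂ i : {i // i ∈ T}, {p : ℝ × ({i // i ∈ T} → ℝ) | θ i + p.2 i < θ x₀ + p.1} := by
      ext p; simp [hBdef]
    rw [h1]
    exact MeasurableSet.iInter fun i => measurableSet_lt (by fun_prop) (by fun_prop)
  have hevent : {ω | ∀ x : X, x ≠ x₀ → θ x + γ x ω < θ x₀ + γ x₀ ω}
      = (fun ω => (γ x₀ ω, V ω)) ⁻¹' B := by
    ext ω
    simp only [Set.mem_setOf_eq, Set.mem_preimage, hBdef, hV]
    constructor
    · intro h i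
      exact h i (Finset.ne_of_mem_erase i.2)
    · intro h x hx
      exact h ⟨x, by simp [hT, hx]⟩
  haveI : IsProbabilityMeasure (P.map V) := Measure.isProbabilityMeasure_map hVmeas.aemeasurable
  haveI : IsProbabilityMeasure (P.map (γ x₀)) :=
    Measure.isProbabilityMeasure_map (hmeas x₀).aemeasurable
  rw [hevent, ← Measure.map_apply ((hmeas x₀).prodMk hVmeas) hB, hmapprod,
    Measure.prod_apply hB]
  -- slice computation
  have hslice : ∀ t : ℝ, (P.map V) (Prod.mk t ⁻¹' B)
      = ENNReal.ofReal (∏ x ∈ T, gCDF 1 (θ x₀ + t - θ x)) := by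
    intro t
    have hset : Prod.mk t ⁻¹' B
        = Set.pi univ (fun i : {i // i ∈ T} => Iio (θ x₀ + t - θ (i : X))) := by
      ext v
      simp only [Set.mem_preimage, hBdef, Set.mem_setOf_eq, Set.mem_univ_pi, Set.mem_Iio]
      exact forall_congr' fun i => by constructor <;> intro h <;> linarith
    rw [hset, Measure.map_apply hVmeas (MeasurableSet.univ_pi fun i => measurableSet_Iio)]
    have hpre : V ⁻¹' (univ.pi fun i : {i // i ∈ T} => Iio (θ x₀ + t - θ (i : X)))
        = ⋂ x ∈ T, γ x ⁻¹' Iio (θ x₀ + t - θ x) := by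
      ext ω
      simp only [Set.mem_preimage, Set.mem_univ_pi, Set.mem_Iio, Set.mem_iInter, hV]
      exact ⟨fun h x hx => h ⟨x, hx⟩, fun h i => h i i.2⟩
    rw [hpre, hindep.meas_biInter (fun x _ => ⟨Iio (θ x₀ + t - θ x), measurableSet_Iio, rfl⟩)]
    rw [Finset.prod_congr rfl (fun x _ => hlio x (θ x₀ + t - θ x)),
      ← ENNReal.ofReal_prod_of_nonneg (fun x _ => gCDF_nonneg 1 _)]
  simp_rw [hslice]
  rw [hlaw x₀, gumbelM]
  set A : ℝ := ∑ x : X, exp (θ x - θ x₀) with hA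
  have hApos : 0 < A := Finset.sum_pos (fun x _ => exp_pos _) Finset.univ_nonempty
  have hQmeas : Measurable fun t => ENNReal.ofReal (∏ x ∈ T, gCDF 1 (θ x₀ + t - θ x)) := by
    apply Measurable.ennreal_ofReal
    apply Finset.measurable_prod
    intro x _
    exact ((continuous_gCDF 1).comp (by fun_prop)).measurable
  rw [lintegral_withDensity_eq_lintegral_mul _ ((continuous_gPDF 1).measurable.ennreal_ofReal) hQmeas]
  have hpoint : ∀ t : ℝ, (ENNReal.ofReal (gPDF 1 t)
      * ENNReal.ofReal (∏ x ∈ T, gCDF 1 (θ x₀ + t - θ x))) = ENNReal.ofReal (gPDF A t) := by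
    intro t
    rw [← ENNReal.ofReal_mul (gPDF_nonneg 1 t)]
    congr 1
    have hQ : ∏ x ∈ T, gCDF 1 (θ x₀ + t - θ x)
        = exp (∑ x ∈ T, -(exp (θ x - θ x₀) * exp (-(t + eulerMascheroniConstant)))) := by
      rw [Real.exp_sum]
      refine Finset.prod_congr rfl fun x _ => ?_
      unfold gCDF
      congr 1
      rw [one_mul, ← Real.exp_add]
      congr 1
      ring
    rw [hQ]
    have hAsplit : A = 1 + ∑ x ∈ T, exp (θ x - θ x₀) := by
      rw [hA, ← Finset.add_sum_erase _ _ (Finset.mem_univ x₀), sub_self, Real.exp_zero]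
    unfold gPDF
    rw [mul_assoc, ← Real.exp_add, hAsplit]
    congr 2
    rw [Finset.sum_neg_distrib, ← Finset.sum_mul]
    ring
  simp_rw [Pi.mul_apply, hpoint]
  rw [← ofReal_integral_eq_lintegral_ofReal (integrable_gPDF hApos)
    (ae_of_all _ fun t => gPDF_nonneg A t), integral_gPDF hApos]
  congr 1
  rw [hA]
  have : ∑ x : X, exp (θ x - θ x₀) = (∑ x : X, exp (θ x)) / exp (θ x₀) := by
    rw [Finset.sum_div]
    exact Finset.sum_congr rfl fun x _ => Real.exp_sub _ _
  rw [this, one_div_div]
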